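/- Let V be a nonzero finite-dimensional vector space over 𝕂 and let A, A* : V → V be linear maps that satisfy the cubic q-Serre relations, such that neither A nor A* is nilpotent and the only subspaces W ⊆ V with AW ⊆ W and A*W ⊆ W are 0 and V. Then A and A* are diagonalizable, and there exist an integer d ≥ 0 and nonzero scalars α, α* ∈ 𝕂 such that the set of eigenvalues of A on V is {α q^{d−2i} : 0 ≤ i ≤ d} and the set of eigenvalues of A* on V is {α* q^{d−2i} : 0 ≤ i ≤ d}. -/

import Mathlib

noncomputable section

/-- `[n]_q = (qⁿ − q⁻ⁿ)/(q − q⁻¹)`. -/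
def qInt {K : Type*} [Field K] (q : K) (n : ℕ) : K :=
  (q ^ n - q⁻¹ ^ n) / (q - q⁻¹)

/-- `X, Y` satisfy the cubic `q`-Serre relations. -/
def QSerre {K V : Type*} [Field K] [AddCommGroup V] [Module K V]
    (q : K) (X Y : Module.End K V) : Prop :=
  X ^ 3 * Y - qInt q 3 • (X ^ 2 * Y * X) + qInt q 3 • (X * Y * X ^ 2) - Y * X ^ 3 = 0 ∧
  Y ^ 3 * X - qInt q 3 • (Y ^ 2 * X * Y) + qInt q 3 • (Y * X * Y ^ 2) - X * Y ^ 3 = 0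

namespace S2Aux



variable {K : Type*} [Field K] {V : Type*} [AddCommGroup V] [Module K V]

open Module Submodule

lemma mem_triple_sup {X : Module.End K V} {a b c : K} (hab : a ≠ b) (hac : a ≠ c) (hbc : b ≠ c)
    {u : V}
    (h : X (X (X u)) = (a + b + c) • X (X u) - (a*b + b*c + a*c) • X u + (a*b*c) • u) :
    u ∈ Module.End.eigenspace X a ⊔ Module.End.eigenspace X b ⊔ Module.End.eigenspace X c := by
  have hab' : a - b ≠ 0 := sub_ne_zero.mpr hab
  have hac' : a - c ≠ 0 := sub_ne_zero.mpr hac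
  have hbc' : b - c ≠ 0 := sub_ne_zero.mpr hbc
  obtain ⟨y, hy⟩ : ∃ y, y = X u - c • u := ⟨_, rfl⟩
  have hXy : X y = X (X u) - c • X u := by rw [hy, map_sub, map_smul]
  have hXXy : X (X y) = (a + b) • X y - (a*b) • y := by
    rw [hXy, map_sub, map_smul, h, hy]; module
  obtain ⟨ya, hya⟩ : ∃ w, w = (a - b)⁻¹ • (X y - b • y) := ⟨_, rfl⟩
  obtain ⟨yb, hyb⟩ : ∃ w, w = (a - b)⁻¹ • (a • y - X y) := ⟨_, rfl⟩
  have hXya : X ya = a • ya := by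
    rw [hya, map_smul, map_sub, map_smul, hXXy]
    match_scalars <;> (field_simp; try ring)
  have hXyb : X yb = b • yb := by
    rw [hyb, map_smul, map_sub, map_smul, hXXy]
    match_scalars <;> (field_simp; try ring)
  have hsum : ya + yb = y := by
    rw [hya, hyb]
    match_scalars <;> (field_simp; try ring)
  obtain ⟨ea, hea⟩ : ∃ w, w = (a - c)⁻¹ • ya := ⟨_, rfl⟩
  obtain ⟨eb, heb⟩ : ∃ w, w = (b - c)⁻¹ • yb := ⟨_, rfl⟩
  obtain ⟨u0, hu0⟩ : ∃ w, w = u - ea - eb := ⟨_, rfl⟩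
  have hXea : X ea = a • ea := by rw [hea, map_smul, hXya]; module
  have hXeb : X eb = b • eb := by rw [heb, map_smul, hXyb]; module
  have hXu0 : X u0 = c • u0 := by
    have hXu : X u = ya + yb + c • u := by rw [hsum, hy]; module
    rw [hu0, map_sub, map_sub, hXea, hXeb, hXu, hea, heb, hya, hyb]
    match_scalars <;> (field_simp; try ring)
  have hmem : u = u0 + ea + eb := by rw [hu0]; module
  have h1 : Module.End.eigenspace X a ≤
      Module.End.eigenspace X a ⊔ Module.End.eigenspace X b ⊔ Module.End.eigenspace X c :=
    le_sup_of_le_left le_sup_left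
  have h2 : Module.End.eigenspace X b ≤
      Module.End.eigenspace X a ⊔ Module.End.eigenspace X b ⊔ Module.End.eigenspace X c :=
    le_sup_of_le_left le_sup_right
  have h3 : Module.End.eigenspace X c ≤
      Module.End.eigenspace X a ⊔ Module.End.eigenspace X b ⊔ Module.End.eigenspace X c :=
    le_sup_right
  rw [hmem]
  exact Submodule.add_mem _
    (Submodule.add_mem _ (h3 (Module.End.mem_eigenspace_iff.mpr hXu0))
      (h1 (Module.End.mem_eigenspace_iff.mpr hXea)))
    (h2 (Module.End.mem_eigenspace_iff.mpr hXeb))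


variable {K : Type*} [Field K] {V : Type*} [AddCommGroup V] [Module K V]

lemma cube_of_serre {c3 : K} {X Y : Module.End K V}
    (hrel : X ^ 3 * Y - c3 • (X ^ 2 * Y * X) + c3 • (X * Y * X ^ 2) - Y * X ^ 3 = 0)
    {μ : K} {x : V} (hx : X x = μ • x) :
    X (X (X (Y x))) = (c3*μ) • X (X (Y x)) - (c3*μ^2) • X (Y x) + (μ^3) • Y x := by
  have h := DFunLike.congr_fun hrel x
  have e3 : X ^ 3 = X * X * X := by rw [pow_succ, pow_two]
  have e2 : X ^ 2 = X * X := pow_two X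
  rw [e3, e2] at h
  simp only [LinearMap.sub_apply, LinearMap.add_apply, LinearMap.smul_apply,
    Module.End.mul_apply, LinearMap.zero_apply, hx, map_smul] at h
  linear_combination (norm := module) h

variable {K : Type*} [Field K] {V : Type*} [AddCommGroup V] [Module K V]

lemma qInt_three {q : K} (hq : q ≠ 0) (hq2 : q ^ 2 ≠ 1) :
    qInt q 3 = q^2 + 1 + (q^2)⁻¹ := by
  have h1 : q - q⁻¹ ≠ 0 := by
    intro h
    apply hq2
    have := sub_eq_zero.mp h
    field_simp at this
    exact this
  rw [qInt, div_eq_iff h1]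
  field_simp
  ring

lemma move {q : K} (hq : q ≠ 0) (hq2 : q ^ 2 ≠ 1) (hq4 : q ^ 4 ≠ 1)
    {X Y : Module.End K V}
    (hrel : X ^ 3 * Y - qInt q 3 • (X ^ 2 * Y * X) + qInt q 3 • (X * Y * X ^ 2) - Y * X ^ 3 = 0)
    {μ : K} (hμ : μ ≠ 0) {x : V} (hx : x ∈ Module.End.eigenspace X μ) :
    Y x ∈ Module.End.eigenspace X (q^2 * μ) ⊔ Module.End.eigenspace X μ ⊔
      Module.End.eigenspace X ((q^2)⁻¹ * μ) := by
  have hq2' : (q:K)^2 ≠ 0 := pow_ne_zero _ hq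
  rw [Module.End.mem_eigenspace_iff] at hx
  have hcube := cube_of_serre hrel hx
  have cancel : ∀ c : K, c * μ = μ → c = 1 := fun c hcm =>
    mul_right_cancel₀ hμ (by rw [one_mul]; exact hcm)
  have hab : q^2 * μ ≠ μ := fun h => hq2 (cancel _ h)
  have hbc : μ ≠ (q^2)⁻¹ * μ := by
    intro h
    apply hq2
    refine cancel _ ?_
    calc q^2 * μ = q^2 * ((q^2)⁻¹ * μ) := by rw [← h]
    _ = μ := by rw [← mul_assoc, mul_inv_cancel₀ hq2', one_mul]
  have hac : q^2 * μ ≠ (q^2)⁻¹ * μ := by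
    intro h
    apply hq4
    refine cancel _ ?_
    calc q^4 * μ = q^2 * (q^2 * μ) := by ring
    _ = q^2 * ((q^2)⁻¹ * μ) := by rw [h]
    _ = μ := by rw [← mul_assoc, mul_inv_cancel₀ hq2', one_mul]
  refine mem_triple_sup hab hac hbc ?_
  rw [hcube, qInt_three hq hq2]
  match_scalars <;> (field_simp; try ring)

variable {K : Type*} [Field K] {V : Type*} [AddCommGroup V] [Module K V]

lemma exists_ne_zero_eigenvalue [IsAlgClosed K] [FiniteDimensional K V] [Nontrivial V]
    {X : Module.End K V} (hX : ¬ IsNilpotent X) : ∃ μ : K, μ ≠ 0 ∧ X.HasEigenvalue μ := by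
  by_contra hcon
  push_neg at hcon
  apply hX
  have htop := Module.End.iSup_maxGenEigenspace_eq_top X
  have hbot : ∀ μ : K, μ ≠ 0 → X.maxGenEigenspace μ = ⊥ := by
    intro μ hμ
    by_contra hb
    refine hcon μ hμ ?_
    rw [Module.End.maxGenEigenspace_eq_genEigenspace_finrank] at hb
    exact Module.End.hasEigenvalue_of_hasGenEigenvalue (k := Module.finrank K V) hb
  have h0 : X.maxGenEigenspace 0 = ⊤ := by
    rw [← htop]
    apply le_antisymm (le_iSup _ 0)
    refine iSup_le fun μ => ?_
    rcases eq_or_ne μ 0 with rfl | hμ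
    · exact le_rfl
    · rw [hbot μ hμ]; exact bot_le
  refine ⟨Module.finrank K V, ?_⟩
  rw [Module.End.maxGenEigenspace_eq_genEigenspace_finrank] at h0
  ext v
  have hv : v ∈ X.genEigenspace 0 (Module.finrank K V) := by rw [h0]; trivial
  rw [Module.End.mem_genEigenspace] at hv
  have hv' : ∃ l ≤ Module.finrank K V, (X ^ l) v = 0 := by simpa using hv
  obtain ⟨l, hl, hlv⟩ := hv'
  have heq : (X ^ Module.finrank K V) v = (X ^ (Module.finrank K V - l)) ((X ^ l) v) := by
    rw [← Module.End.mul_apply, ← pow_add]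
    congr 2
    omega
  simp [heq, hlv]

variable {K : Type*} [Field K] {V : Type*} [AddCommGroup V] [Module K V]

lemma zpow_eq_one_iff {q : K} (hq : q ≠ 0) (hq1 : ∀ n : ℕ, 0 < n → q ^ n ≠ 1)
    {k : ℤ} (h : q ^ k = 1) : k = 0 := by
  have key : ∀ k : ℤ, 0 < k → q ^ k ≠ 1 := by
    intro k hk hqk
    refine hq1 k.toNat (by omega) ?_
    rwa [show k = (k.toNat : ℤ) by omega, zpow_natCast] at hqk
  rcases lt_trichotomy k 0 with hk | hk | hk
  · exfalso
    refine key (-k) (by omega) ?_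
    rw [zpow_neg, h, inv_one]
  · exact hk
  · exact absurd h (key k hk)

lemma theta_inj {q : K} (hq : q ≠ 0) (hq1 : ∀ n : ℕ, 0 < n → q ^ n ≠ 1)
    {θ₀ : K} (hθ₀ : θ₀ ≠ 0) {n n' : ℤ}
    (h : θ₀ * q ^ (2*n) = θ₀ * q ^ (2*n')) : n = n' := by
  have h2 : q ^ (2*n) = q ^ (2*n') := mul_left_cancel₀ hθ₀ h
  have h3 : q ^ (2*n - 2*n') = 1 := by
    rw [zpow_sub₀ hq, h2, div_self (zpow_ne_zero _ hq)]
  have := zpow_eq_one_iff hq hq1 h3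
  omega

lemma map_eigenspace_le (X : Module.End K V) (μ : K) :
    Submodule.map X (Module.End.eigenspace X μ) ≤ Module.End.eigenspace X μ := by
  rintro _ ⟨x, hx, rfl⟩
  have hx' : X x = μ • x := Module.End.mem_eigenspace_iff.mp hx
  rw [Module.End.mem_eigenspace_iff, hx', map_smul, hx']

lemma eigenspace_eq_bot {X : Module.End K V} {μ : K} (h : ¬ X.HasEigenvalue μ) :
    Module.End.eigenspace X μ = ⊥ := by
  rwa [Module.End.hasEigenvalue_iff, not_not] at h

lemma chain_structure [IsAlgClosed K] [FiniteDimensional K V] [Nontrivial V]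
    {q : K} (hq : q ≠ 0) (hq1 : ∀ n : ℕ, 0 < n → q ^ n ≠ 1)
    {X Y : Module.End K V}
    (hmove : ∀ μ : K, μ ≠ 0 → ∀ x ∈ Module.End.eigenspace X μ,
      Y x ∈ Module.End.eigenspace X (q^2 * μ) ⊔ Module.End.eigenspace X μ ⊔
        Module.End.eigenspace X ((q^2)⁻¹ * μ))
    (hX : ¬ IsNilpotent X)
    (hirr : ∀ W : Submodule K V, Submodule.map X W ≤ W → Submodule.map Y W ≤ W →
      W = ⊥ ∨ W = ⊤) :
    ∃ (θ₀ : K) (m M : ℤ), θ₀ ≠ 0 ∧ m ≤ M ∧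
      (⨆ μ : K, Module.End.eigenspace X μ) = ⊤ ∧
      {μ : K | X.HasEigenvalue μ} =
        {μ : K | ∃ n : ℤ, m ≤ n ∧ n ≤ M ∧ μ = θ₀ * q ^ (2*n)} := by
  classical
  obtain ⟨θ₀, hθ₀, hev⟩ := exists_ne_zero_eigenvalue hX
  set θ : ℤ → K := fun n => θ₀ * q ^ (2*n) with hθdef
  have hθne : ∀ n, θ n ≠ 0 := fun n => mul_ne_zero hθ₀ (zpow_ne_zero _ hq)
  have hθ0 : θ 0 = θ₀ := by simp [hθdef]
  have hq2 : (q:K)^2 ≠ 0 := pow_ne_zero _ hq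
  have hup : ∀ n : ℤ, q^2 * θ n = θ (n+1) := by
    intro n
    rw [hθdef]
    simp only
    rw [show 2*(n+1) = 2*n + 2 by ring, zpow_add₀ hq]
    rw [show ((2:ℤ)) = ((2:ℕ) : ℤ) by norm_num, zpow_natCast]
    ring
  have hdown : ∀ n : ℤ, (q^2)⁻¹ * θ n = θ (n-1) := by
    intro n
    rw [hθdef]
    simp only
    rw [show 2*(n-1) = 2*n + (-2) by ring, zpow_add₀ hq, zpow_neg]
    rw [show ((2:ℤ)) = ((2:ℕ) : ℤ) by norm_num, zpow_natCast]
    ring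
  set E : ℤ → Submodule K V := fun n => Module.End.eigenspace X (θ n) with hEdef
  have hEX : ∀ n, Submodule.map X (E n) ≤ E n := fun n => map_eigenspace_le X (θ n)
  have hEY : ∀ n, Submodule.map Y (E n) ≤ E (n+1) ⊔ E n ⊔ E (n-1) := by
    rintro n _ ⟨x, hx, rfl⟩
    have := hmove (θ n) (hθne n) x hx
    rwa [hup n, hdown n] at this
  -- W = sup of chain
  set W : Submodule K V := ⨆ n : ℤ, E n with hWdef
  have hWX : Submodule.map X W ≤ W := by
    rw [hWdef, Submodule.map_iSup]
    exact iSup_le fun n => (hEX n).trans (le_iSup E n)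
  have hWY : Submodule.map Y W ≤ W := by
    rw [hWdef, Submodule.map_iSup]
    refine iSup_le fun n => (hEY n).trans ?_
    exact sup_le (sup_le (le_iSup E (n+1)) (le_iSup E n)) (le_iSup E (n-1))
  have hWne : W ≠ ⊥ := by
    intro hbot
    refine hev ?_
    rw [← hθ0]
    have : E 0 ≤ ⊥ := hbot ▸ le_iSup E 0
    rw [Module.End.hasEigenvalue_iff] at *
    exact absurd (le_bot_iff.mp this) (by rw [← hθ0] at hev; exact hev)
  have hW : W = ⊤ := (hirr W hWX hWY).resolve_left hWne
  have htop : (⨆ μ : K, Module.End.eigenspace X μ) = ⊤ := by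
    refine le_antisymm le_top ?_
    rw [← hW, hWdef]
    exact iSup_le fun n => le_iSup (Module.End.eigenspace X) (θ n)
  have hindep := Module.End.eigenspaces_iSupIndep X
  have hdisjW : ∀ (μ : K) (g : ℤ), (∀ n : ℤ, n < g → μ ≠ θ n) →
      Disjoint (Module.End.eigenspace X μ) (⨆ n : ℤ, ⨆ (_ : n < g), E n) := by
    intro μ g hne
    refine Disjoint.mono_right ?_ (iSupIndep_def.mp hindep μ)
    refine iSup_le fun n => iSup_le fun hn => ?_
    exact le_iSup_of_le (θ n) (le_iSup_of_le (fun hh => hne n hn hh.symm) le_rfl)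
  have hdisjWall : ∀ μ : K, (∀ n : ℤ, μ ≠ θ n) →
      Disjoint (Module.End.eigenspace X μ) W := by
    intro μ hne
    refine Disjoint.mono_right ?_ (iSupIndep_def.mp hindep μ)
    refine iSup_le fun n => ?_
    exact le_iSup_of_le (θ n) (le_iSup_of_le (fun hh => hne n hh.symm) le_rfl)
  have hspec1 : ∀ μ : K, X.HasEigenvalue μ → ∃ n : ℤ, μ = θ n := by
    intro μ hμ
    by_contra hcon
    push_neg at hcon
    have hd := hdisjWall μ hcon
    have : Module.End.eigenspace X μ = ⊥ :=
      hd.eq_bot_of_le (by rw [hW]; exact le_top)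
    exact (Module.End.hasEigenvalue_iff.mp hμ) this
  set I : Set ℤ := {n | X.HasEigenvalue (θ n)} with hIdef
  have hI0 : (0:ℤ) ∈ I := by rw [hIdef, Set.mem_setOf_eq, hθ0]; exact hev
  have hIfin : I.Finite := by
    have : I = θ ⁻¹' {μ | X.HasEigenvalue μ} := rfl
    rw [this]
    refine Set.Finite.preimage ?_ (Module.End.finite_hasEigenvalue X)
    intro n _ n' _ h
    exact theta_inj hq hq1 hθ₀ h
  set J := hIfin.toFinset with hJdef
  have hJmem : ∀ n, n ∈ J ↔ n ∈ I := fun n => Set.Finite.mem_toFinset hIfin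
  have hJne : J.Nonempty := ⟨0, (hJmem 0).mpr hI0⟩
  set m := J.min' hJne with hmdef
  set M := J.max' hJne with hMdef
  have hmM : m ≤ M := J.min'_le M (J.max'_mem hJne)
  have hmI : m ∈ I := (hJmem m).mp (J.min'_mem hJne)
  have hMI : M ∈ I := (hJmem M).mp (J.max'_mem hJne)
  have hcontig : ∀ g : ℤ, m ≤ g → g ≤ M → g ∈ I := by
    intro g hmg hgM
    by_contra hg
    have hEg : E g = ⊥ := eigenspace_eq_bot hg
    set W₁ : Submodule K V := ⨆ n : ℤ, ⨆ (_ : n < g), E n with hW₁def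
    have hle : ∀ n : ℤ, n < g → E n ≤ W₁ := fun n hn =>
      le_iSup_of_le n (le_iSup_of_le hn le_rfl)
    have hW₁X : Submodule.map X W₁ ≤ W₁ := by
      rw [hW₁def, Submodule.map_iSup]
      refine iSup_le fun n => ?_
      rw [Submodule.map_iSup]
      exact iSup_le fun hn => (hEX n).trans (hle n hn)
    have hW₁Y : Submodule.map Y W₁ ≤ W₁ := by
      rw [hW₁def, Submodule.map_iSup]
      refine iSup_le fun n => ?_
      rw [Submodule.map_iSup]
      refine iSup_le fun hn => (hEY n).trans ?_
      refine sup_le (sup_le ?_ (hle n hn)) (hle (n-1) (by omega))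
      rcases lt_or_eq_of_le (show n + 1 ≤ g by omega) with h' | h'
      · exact hle (n+1) h'
      · rw [h', hEg]; exact bot_le
    have hW₁ne : W₁ ≠ ⊥ := by
      intro hbot
      have hmg' : m < g := lt_of_le_of_ne hmg (fun h => hg (h ▸ hmI))
      have : E m ≤ ⊥ := hbot ▸ hle m hmg'
      exact (Module.End.hasEigenvalue_iff.mp hmI) (le_bot_iff.mp this)
    have hW₁top : W₁ = ⊤ := (hirr W₁ hW₁X hW₁Y).resolve_left hW₁ne
    have hgM' : g < M := lt_of_le_of_ne hgM (fun h => hg (h ▸ hMI))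
    have hd : Disjoint (E M) W₁ := by
      refine hdisjW (θ M) g fun n hn h => ?_
      have := theta_inj hq hq1 hθ₀ h
      omega
    have : E M = ⊥ := hd.eq_bot_of_le (by rw [hW₁top]; exact le_top)
    exact (Module.End.hasEigenvalue_iff.mp hMI) this
  refine ⟨θ₀, m, M, hθ₀, hmM, htop, ?_⟩
  ext μ
  simp only [Set.mem_setOf_eq]
  constructor
  · intro hμ
    obtain ⟨n, rfl⟩ := hspec1 μ hμ
    have hnI : n ∈ I := hμ
    have hnJ : n ∈ J := (hJmem n).mpr hnI
    exact ⟨n, J.min'_le n hnJ, J.le_max' n hnJ, rfl⟩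
  · rintro ⟨n, h1, h2, rfl⟩
    exact hcontig n h1 h2

variable {K : Type*} [Field K] {V : Type*} [AddCommGroup V] [Module K V]

lemma hup_theta {q : K} (hq : q ≠ 0) (θ₀ : K) (n : ℤ) :
    q^2 * (θ₀ * q ^ (2*n)) = θ₀ * q ^ (2*(n+1)) := by
  rw [show 2*(n+1) = 2*n + 2 by ring, zpow_add₀ hq]
  rw [show ((2:ℤ)) = ((2:ℕ) : ℤ) by norm_num, zpow_natCast]
  ring

lemma hdown_theta {q : K} (hq : q ≠ 0) (θ₀ : K) (n : ℤ) :
    (q^2)⁻¹ * (θ₀ * q ^ (2*n)) = θ₀ * q ^ (2*(n-1)) := by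
  rw [show 2*(n-1) = 2*n + (-2) by ring, zpow_add₀ hq, zpow_neg]
  rw [show ((2:ℤ)) = ((2:ℕ) : ℤ) by norm_num, zpow_natCast]
  ring

lemma sub_smul_map_le (X : Module.End K V) (c : K) (N : Submodule K V) :
    Submodule.map (X - c • (1 : Module.End K V)) N ≤ Submodule.map X N ⊔ N := by
  rintro _ ⟨x, hx, rfl⟩
  have : (X - c • (1 : Module.End K V)) x = X x - c • x := by
    simp [LinearMap.sub_apply, Module.End.one_apply]
  rw [this]
  exact Submodule.sub_mem _ (Submodule.mem_sup_left ⟨x, hx, rfl⟩)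
    (Submodule.mem_sup_right (Submodule.smul_mem _ _ hx))

lemma map_le_sub_smul (X : Module.End K V) (c : K) (N : Submodule K V) :
    Submodule.map X N ≤ Submodule.map (X - c • (1 : Module.End K V)) N ⊔ N := by
  rintro _ ⟨x, hx, rfl⟩
  have : X x = (X - c • (1 : Module.End K V)) x + c • x := by
    simp [LinearMap.sub_apply, Module.End.one_apply]
  rw [this]
  exact Submodule.add_mem _ (Submodule.mem_sup_left ⟨x, hx, rfl⟩)
    (Submodule.mem_sup_right (Submodule.smul_mem _ _ hx))

lemma sub_smul_eigen_self (X : Module.End K V) (c : K) :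
    Submodule.map (X - c • (1 : Module.End K V)) (Module.End.eigenspace X c) = ⊥ := by
  rw [eq_bot_iff]
  rintro _ ⟨x, hx, rfl⟩
  have hx' : X x = c • x := Module.End.mem_eigenspace_iff.mp hx
  simp [LinearMap.sub_apply, Module.End.one_apply, hx']

lemma length_le {q : K} (hq : q ≠ 0) (hq1 : ∀ n : ℕ, 0 < n → q ^ n ≠ 1)
    {X Y : Module.End K V} {θ₀ β₀ : K} (hθ₀ : θ₀ ≠ 0) (hβ₀ : β₀ ≠ 0)
    {m M m' M' : ℤ} (hmM : m ≤ M) (hmM' : m' ≤ M')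
    (hXspec : {μ : K | X.HasEigenvalue μ} =
        {μ : K | ∃ n : ℤ, m ≤ n ∧ n ≤ M ∧ μ = θ₀ * q ^ (2*n)})
    (hYspec : {μ : K | Y.HasEigenvalue μ} =
        {μ : K | ∃ n : ℤ, m' ≤ n ∧ n ≤ M' ∧ μ = β₀ * q ^ (2*n)})
    (hYtop : (⨆ μ : K, Module.End.eigenspace Y μ) = ⊤)
    (hmoveX : ∀ μ : K, μ ≠ 0 → ∀ x ∈ Module.End.eigenspace X μ,
      Y x ∈ Module.End.eigenspace X (q^2 * μ) ⊔ Module.End.eigenspace X μ ⊔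
        Module.End.eigenspace X ((q^2)⁻¹ * μ))
    (hmoveY : ∀ μ : K, μ ≠ 0 → ∀ x ∈ Module.End.eigenspace Y μ,
      X x ∈ Module.End.eigenspace Y (q^2 * μ) ⊔ Module.End.eigenspace Y μ ⊔
        Module.End.eigenspace Y ((q^2)⁻¹ * μ))
    (hirr : ∀ W : Submodule K V, Submodule.map X W ≤ W → Submodule.map Y W ≤ W →
      W = ⊥ ∨ W = ⊤) :
    M - m ≤ M' - m' := by
  classical
  set θ : ℤ → K := fun n => θ₀ * q ^ (2*n) with hθdef
  set φ : ℤ → K := fun j => β₀ * q ^ (2*j) with hφdef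
  have hθne : ∀ n, θ n ≠ 0 := fun n => mul_ne_zero hθ₀ (zpow_ne_zero _ hq)
  have hφne : ∀ j, φ j ≠ 0 := fun j => mul_ne_zero hβ₀ (zpow_ne_zero _ hq)
  set E : ℤ → Submodule K V := fun n => Module.End.eigenspace X (θ n) with hEdef
  set F : ℤ → Submodule K V := fun j => Module.End.eigenspace Y (φ j) with hFdef
  -- eigenvalue facts
  have hXev : ∀ n : ℤ, m ≤ n → n ≤ M → X.HasEigenvalue (θ n) := by
    intro n h1 h2
    have := (Set.ext_iff.mp hXspec (θ n)).mpr ⟨n, h1, h2, rfl⟩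
    exact this
  have hYev : ∀ j : ℤ, m' ≤ j → j ≤ M' → Y.HasEigenvalue (φ j) := by
    intro j h1 h2
    exact (Set.ext_iff.mp hYspec (φ j)).mpr ⟨j, h1, h2, rfl⟩
  have hEbot : ∀ n : ℤ, (n < m ∨ M < n) → E n = ⊥ := by
    intro n hn
    refine eigenspace_eq_bot fun h => ?_
    obtain ⟨n', h1, h2, heq⟩ := (Set.ext_iff.mp hXspec (θ n)).mp h
    have := theta_inj hq hq1 hθ₀ heq
    omega
  have hFbot : ∀ j : ℤ, (j < m' ∨ M' < j) → F j = ⊥ := by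
    intro j hj
    refine eigenspace_eq_bot fun h => ?_
    obtain ⟨j', h1, h2, heq⟩ := (Set.ext_iff.mp hYspec (φ j)).mp h
    have := theta_inj hq hq1 hβ₀ heq
    omega
  -- tridiagonal actions
  have hYE : ∀ n, Submodule.map Y (E n) ≤ E (n+1) ⊔ E n ⊔ E (n-1) := by
    rintro n _ ⟨x, hx, rfl⟩
    have := hmoveX (θ n) (hθne n) x hx
    rwa [hθdef, hup_theta hq θ₀ n, hdown_theta hq θ₀ n] at this
  have hXF : ∀ j, Submodule.map X (F j) ≤ F (j+1) ⊔ F j ⊔ F (j-1) := by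
    rintro j _ ⟨x, hx, rfl⟩
    have := hmoveY (φ j) (hφne j) x hx
    rwa [hφdef, hup_theta hq β₀ j, hdown_theta hq β₀ j] at this
  have hXE : ∀ n, Submodule.map X (E n) ≤ E n := fun n => map_eigenspace_le X (θ n)
  have hYF : ∀ j, Submodule.map Y (F j) ≤ F j := fun j => map_eigenspace_le Y (φ j)
  -- filtrations
  set P : ℤ → Submodule K V := fun i => ⨆ n : ℤ, ⨆ (_ : n ≤ i), E n with hPdef
  set Q : ℤ → Submodule K V := fun i => ⨆ j : ℤ, ⨆ (_ : i ≤ j), F j with hQdef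
  have hEP : ∀ {n i : ℤ}, n ≤ i → E n ≤ P i := fun {n i} h =>
    le_iSup_of_le n (le_iSup_of_le h le_rfl)
  have hFQ : ∀ {j i : ℤ}, i ≤ j → F j ≤ Q i := fun {j i} h =>
    le_iSup_of_le j (le_iSup_of_le h le_rfl)
  have hPmono : ∀ {i i' : ℤ}, i ≤ i' → P i ≤ P i' := by
    intro i i' h
    refine iSup_le fun n => iSup_le fun hn => hEP (le_trans hn h)
  have hQmono : ∀ {i i' : ℤ}, i' ≤ i → Q i ≤ Q i' := by
    intro i i' h
    refine iSup_le fun j => iSup_le fun hj => hFQ (le_trans h hj)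
  -- step lemmas
  have hPstep : ∀ k : ℤ, Submodule.map (X - θ k • (1:Module.End K V)) (P k) ≤ P (k-1) := by
    intro k
    rw [hPdef]
    simp only [Submodule.map_iSup]
    refine iSup_le fun n => iSup_le fun hn => ?_
    rcases eq_or_lt_of_le hn with rfl | hlt
    · rw [sub_smul_eigen_self X (θ n)]
      exact bot_le
    · refine le_trans (sub_smul_map_le X (θ k) (E n)) ?_
      exact sup_le (le_trans (hXE n) (hEP (by omega))) (hEP (by omega))
  have hQslide : ∀ (c : K) (l : ℤ),
      Submodule.map (X - c • (1:Module.End K V)) (Q l) ≤ Q (l-1) := by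
    intro c l
    rw [hQdef]
    simp only [Submodule.map_iSup]
    refine iSup_le fun j => iSup_le fun hj => ?_
    refine le_trans (sub_smul_map_le X c (F j)) ?_
    refine sup_le (le_trans (hXF j) ?_) (hFQ (by omega))
    exact sup_le (sup_le (hFQ (by omega)) (hFQ (by omega))) (hFQ (by omega))
  have hQstep : ∀ l : ℤ, Submodule.map (Y - φ l • (1:Module.End K V)) (Q l) ≤ Q (l+1) := by
    intro l
    rw [hQdef]
    simp only [Submodule.map_iSup]
    refine iSup_le fun j => iSup_le fun hj => ?_
    rcases eq_or_lt_of_le hj with rfl | hlt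
    · rw [sub_smul_eigen_self Y (φ l)]
      exact bot_le
    · refine le_trans (sub_smul_map_le Y (φ l) (F j)) ?_
      exact sup_le (le_trans (hYF j) (hFQ (by omega))) (hFQ (by omega))
  have hPslide : ∀ (c : K) (k : ℤ),
      Submodule.map (Y - c • (1:Module.End K V)) (P k) ≤ P (k+1) := by
    intro c k
    rw [hPdef]
    simp only [Submodule.map_iSup]
    refine iSup_le fun n => iSup_le fun hn => ?_
    refine le_trans (sub_smul_map_le Y c (E n)) ?_
    refine sup_le (le_trans (hYE n) ?_) (hEP (by omega))
    exact sup_le (sup_le (hEP (by omega)) (hEP (by omega))) (hEP (by omega))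
  -- split subspaces
  set U : ℤ → Submodule K V := fun i => P (m + i) ⊓ Q (m' + i) with hUdef
  have hUdown : ∀ i : ℤ, Submodule.map (X - θ (m + i) • (1:Module.End K V)) (U i) ≤ U (i-1) := by
    intro i
    refine le_trans (Submodule.map_inf_le _) ?_
    refine inf_le_inf (le_trans (hPstep (m+i)) (hPmono (by omega)))
      (le_trans (hQslide _ (m'+i)) (hQmono (by omega)))
  have hUup : ∀ i : ℤ, Submodule.map (Y - φ (m' + i) • (1:Module.End K V)) (U i) ≤ U (i+1) := by
    intro i
    refine le_trans (Submodule.map_inf_le _) ?_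
    refine inf_le_inf (le_trans (hPslide _ (m+i)) (hPmono (by omega)))
      (le_trans (hQstep (m'+i)) (hQmono (by omega)))
  have hUX : ∀ i : ℤ, Submodule.map X (U i) ≤ U (i-1) ⊔ U i := by
    intro i
    refine le_trans (map_le_sub_smul X (θ (m+i)) (U i)) ?_
    exact sup_le (le_trans (hUdown i) le_sup_left) le_sup_right
  have hUY : ∀ i : ℤ, Submodule.map Y (U i) ≤ U i ⊔ U (i+1) := by
    intro i
    refine le_trans (map_le_sub_smul Y (φ (m'+i)) (U i)) ?_
    exact sup_le (le_trans (hUup i) le_sup_right) le_sup_left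
  -- W₂ is everything
  set W₂ : Submodule K V := ⨆ i : ℤ, U i with hW₂def
  have hW₂X : Submodule.map X W₂ ≤ W₂ := by
    rw [hW₂def, Submodule.map_iSup]
    refine iSup_le fun i => le_trans (hUX i) (sup_le (le_iSup U (i-1)) (le_iSup U i))
  have hW₂Y : Submodule.map Y W₂ ≤ W₂ := by
    rw [hW₂def, Submodule.map_iSup]
    refine iSup_le fun i => le_trans (hUY i) (sup_le (le_iSup U i) (le_iSup U (i+1)))
  have hQm' : Q m' = ⊤ := by
    refine le_antisymm le_top ?_
    rw [← hYtop]
    refine iSup_le fun μ => ?_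
    by_cases hb : Module.End.eigenspace Y μ = ⊥
    · rw [hb]; exact bot_le
    · have hμ : Y.HasEigenvalue μ := Module.End.hasEigenvalue_iff.mpr hb
      obtain ⟨j, h1, h2, rfl⟩ := (Set.ext_iff.mp hYspec μ).mp hμ
      exact hFQ h1
  have hU0 : U 0 ≠ ⊥ := by
    intro hbot
    have h1 : E m ≤ U 0 := by
      rw [hUdef]
      simp only
      rw [show m' + 0 = m' by ring, hQm', inf_top_eq]
      exact hEP (by omega)
    rw [hbot, le_bot_iff] at h1
    exact (Module.End.hasEigenvalue_iff.mp (hXev m le_rfl hmM)) h1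
  have hW₂ne : W₂ ≠ ⊥ := by
    intro hbot
    exact hU0 (le_bot_iff.mp (hbot ▸ le_iSup U 0))
  have hW₂top : W₂ = ⊤ := (hirr W₂ hW₂X hW₂Y).resolve_left hW₂ne
  -- vanishing of U outside [0, δ]
  have hUbotneg : ∀ i : ℤ, i < 0 → U i = ⊥ := by
    intro i hi
    rw [hUdef]
    simp only
    rw [eq_bot_iff]
    refine le_trans inf_le_left ?_
    rw [hPdef]
    refine iSup_le fun n => iSup_le fun hn => ?_
    rw [hEbot n (Or.inl (by omega))]
  have hUbotbig : ∀ i : ℤ, M' - m' < i → U i = ⊥ := by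
    intro i hi
    rw [hUdef]
    simp only
    rw [eq_bot_iff]
    refine le_trans inf_le_right ?_
    rw [hQdef]
    refine iSup_le fun j => iSup_le fun hj => ?_
    rw [hFbot j (Or.inr (by omega))]
  set δ : ℕ := (M' - m').toNat with hδdef
  set G : ℕ → Submodule K V := fun j => ⨆ i : ℤ, ⨆ (_ : i ≤ (j:ℤ)), U i with hGdef
  have hUG : ∀ {i : ℤ} {j : ℕ}, i ≤ (j:ℤ) → U i ≤ G j := fun {i j} h =>
    le_iSup_of_le i (le_iSup_of_le h le_rfl)
  have hGtop : G δ = ⊤ := by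
    refine le_antisymm le_top ?_
    rw [← hW₂top, hW₂def]
    refine iSup_le fun i => ?_
    rcases le_or_gt i (δ:ℤ) with h | h
    · exact hUG h
    · rw [hUbotbig i (by omega)]
      exact bot_le
  -- the annihilating operator
  have hkill : ∀ j : ℕ, ∃ T : Module.End K V,
      (∀ (v : V) (n : ℤ), X v = θ n • v →
        T v = (∏ k ∈ Finset.range (j+1), (θ n - θ (m + k))) • v) ∧
      Submodule.map T (G j) = ⊥ := by
    intro j
    induction j with
    | zero =>
      refine ⟨X - θ m • (1:Module.End K V), ?_, ?_⟩
      · intro v n hv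
        simp [Finset.prod_range_one, LinearMap.sub_apply, Module.End.one_apply, hv, sub_smul]
      · rw [eq_bot_iff, hGdef]
        simp only [Submodule.map_iSup]
        refine iSup_le fun i => iSup_le fun hi => ?_
        rcases lt_or_eq_of_le hi with h | h
        · rw [hUbotneg i (by exact_mod_cast h), Submodule.map_bot]
        · subst h
          have h0 := hUdown 0
          rw [show m + 0 = m by ring, hUbotneg (0-1) (by omega)] at h0
          rw [le_bot_iff] at h0
          rw [show ((0:ℕ):ℤ) = (0:ℤ) by norm_num, h0]
    | succ j ih =>
      obtain ⟨T, hT1, hT2⟩ := ih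
      refine ⟨T * (X - θ (m + (j+1:ℕ)) • (1:Module.End K V)), ?_, ?_⟩
      · intro v n hv
        have h1 : (X - θ (m + (j+1:ℕ)) • (1:Module.End K V)) v
            = (θ n - θ (m + (j+1:ℕ))) • v := by
          simp [LinearMap.sub_apply, Module.End.one_apply, hv, sub_smul]
        rw [Module.End.mul_apply, h1, map_smul, hT1 v n hv, smul_smul]
        conv_rhs => rw [Finset.prod_range_succ]
        rw [mul_comm]
      · have hinner : Submodule.map (X - θ (m + (j+1:ℕ)) • (1:Module.End K V)) (G (j+1))
            ≤ G j := by
          rw [hGdef]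
          simp only [Submodule.map_iSup]
          refine iSup_le fun i => iSup_le fun hi => ?_
          rcases lt_or_eq_of_le hi with h | h
          · refine le_trans (sub_smul_map_le X _ (U i)) ?_
            refine sup_le (le_trans (hUX i) ?_) (hUG (by push_cast at h ⊢; omega))
            exact sup_le (hUG (by push_cast at h ⊢; omega)) (hUG (by push_cast at h ⊢; omega))
          · subst h
            have := hUdown ((j:ℤ)+1)
            rw [show m + ((j:ℤ)+1) = m + ((j+1:ℕ):ℤ) by push_cast; ring] at this
            refine le_trans this (hUG (by push_cast; omega))
        rw [Module.End.mul_eq_comp, Submodule.map_comp]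
        rw [eq_bot_iff]
        refine le_trans (Submodule.map_mono hinner) ?_
        rw [hT2]
  obtain ⟨T, hT1, hT2⟩ := hkill δ
  have hT0 : T = 0 := by
    rw [hGtop, Submodule.map_top] at hT2
    exact LinearMap.range_eq_bot.mp hT2
  -- evaluate on a top eigenvector
  obtain ⟨v, hv⟩ := (hXev M hmM le_rfl).exists_hasEigenvector
  have hvX : X v = θ M • v := Module.End.mem_eigenspace_iff.mp hv.1
  have hvne : v ≠ 0 := hv.2
  have := hT1 v M hvX
  rw [hT0] at this
  simp only [LinearMap.zero_apply] at this
  have hprod : (∏ k ∈ Finset.range (δ+1), (θ M - θ (m + k))) = 0 := by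
    by_contra hp
    exact hvne (by
      have := this.symm
      rwa [smul_eq_zero, or_iff_right hp] at this)
  obtain ⟨k, hk, hk0⟩ := Finset.prod_eq_zero_iff.mp hprod
  have hkM : M = m + k := theta_inj hq hq1 hθ₀ (sub_eq_zero.mp hk0)
  have : (k:ℤ) ≤ δ := by
    have := Finset.mem_range.mp hk
    omega
  omega


end S2Aux

/-- Corollary 2.8: if `A, A*` satisfy the cubic `q`-Serre relations, neither
is nilpotent, and the pair acts irreducibly on the nonzero finite-dimensional space `V`, then
`A` and `A*` are diagonalizable and there are `d ≥ 0` and nonzero `α, α*` such that the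
eigenvalue sets of `A` and `A*` are `{α q^{d−2i} : 0 ≤ i ≤ d}` and `{α* q^{d−2i} : 0 ≤ i ≤ d}`. -/
theorem statement2 {K : Type*} [Field K] [IsAlgClosed K] [CharZero K]
    (q : K) (hq : q ≠ 0) (hq1 : ∀ n : ℕ, 0 < n → q ^ n ≠ 1)
    {V : Type*} [AddCommGroup V] [Module K V] [FiniteDimensional K V] [Nontrivial V]
    (A B : Module.End K V) (hS : QSerre q A B)
    (hA : ¬ IsNilpotent A) (hB : ¬ IsNilpotent B)
    (hirr : ∀ W : Submodule K V, Submodule.map A W ≤ W → Submodule.map B W ≤ W →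
      W = ⊥ ∨ W = ⊤) :
    (⨆ μ : K, Module.End.eigenspace A μ) = ⊤ ∧
    (⨆ μ : K, Module.End.eigenspace B μ) = ⊤ ∧
    ∃ (d : ℕ) (α αs : K), α ≠ 0 ∧ αs ≠ 0 ∧
      {μ : K | Module.End.HasEigenvalue A μ} =
        {μ : K | ∃ i : Fin (d + 1), μ = α * q ^ ((d : ℤ) - 2 * (i : ℕ))} ∧
      {μ : K | Module.End.HasEigenvalue B μ} =
        {μ : K | ∃ i : Fin (d + 1), μ = αs * q ^ ((d : ℤ) - 2 * (i : ℕ))} := by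

  obtain ⟨hrel1, hrel2⟩ := hS
  have hq2 : q^2 ≠ 1 := hq1 2 (by norm_num)
  have hq4 : q^4 ≠ 1 := hq1 4 (by norm_num)
  have hmoveA : ∀ μ : K, μ ≠ 0 → ∀ x ∈ Module.End.eigenspace A μ,
      B x ∈ Module.End.eigenspace A (q^2 * μ) ⊔ Module.End.eigenspace A μ ⊔
        Module.End.eigenspace A ((q^2)⁻¹ * μ) :=
    fun μ hμ x hx => S2Aux.move hq hq2 hq4 hrel1 hμ hx
  have hmoveB : ∀ μ : K, μ ≠ 0 → ∀ x ∈ Module.End.eigenspace B μ,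
      A x ∈ Module.End.eigenspace B (q^2 * μ) ⊔ Module.End.eigenspace B μ ⊔
        Module.End.eigenspace B ((q^2)⁻¹ * μ) :=
    fun μ hμ x hx => S2Aux.move hq hq2 hq4 hrel2 hμ hx
  have hirr' : ∀ W : Submodule K V, Submodule.map B W ≤ W → Submodule.map A W ≤ W →
      W = ⊥ ∨ W = ⊤ := fun W h1 h2 => hirr W h2 h1
  obtain ⟨θ₀, m, M, hθ₀, hmM, htopA, hspecA⟩ :=
    S2Aux.chain_structure hq hq1 hmoveA hA hirr
  obtain ⟨β₀, m', M', hβ₀, hmM', htopB, hspecB⟩ :=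
    S2Aux.chain_structure hq hq1 hmoveB hB hirr'
  have hle1 : M - m ≤ M' - m' :=
    S2Aux.length_le hq hq1 hθ₀ hβ₀ hmM hmM' hspecA hspecB htopB hmoveA hmoveB hirr
  have hle2 : M' - m' ≤ M - m :=
    S2Aux.length_le hq hq1 hβ₀ hθ₀ hmM' hmM hspecB hspecA htopA hmoveB hmoveA hirr'
  have hd : M' - m' = M - m := le_antisymm hle2 hle1
  refine ⟨htopA, htopB, (M - m).toNat, θ₀ * q ^ (2*m + (M - m)), β₀ * q ^ (2*m' + (M' - m')),
    mul_ne_zero hθ₀ (zpow_ne_zero _ hq), mul_ne_zero hβ₀ (zpow_ne_zero _ hq), ?_, ?_⟩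
  · rw [hspecA]
    ext μ
    simp only [Set.mem_setOf_eq]
    constructor
    · rintro ⟨n, h1, h2, rfl⟩
      refine ⟨⟨(M - n).toNat, by omega⟩, ?_⟩
      have e1 : (((M - n).toNat : ℕ) : ℤ) = M - n := Int.toNat_of_nonneg (by omega)
      have e2 : (((M - m).toNat : ℕ) : ℤ) = M - m := Int.toNat_of_nonneg (by omega)
      rw [mul_assoc, ← zpow_add₀ hq]
      congr 1
      simp only [Fin.val_mk]
      rw [e1, e2]
      ring
    · rintro ⟨i, rfl⟩
      have hi : (i : ℕ) ≤ (M - m).toNat := by omega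
      refine ⟨M - (i : ℕ), by omega, by omega, ?_⟩
      have e2 : (((M - m).toNat : ℕ) : ℤ) = M - m := Int.toNat_of_nonneg (by omega)
      rw [mul_assoc, ← zpow_add₀ hq]
      congr 1
      rw [e2]
      ring
  · rw [hspecB]
    ext μ
    simp only [Set.mem_setOf_eq]
    constructor
    · rintro ⟨n, h1, h2, rfl⟩
      refine ⟨⟨(M' - n).toNat, by omega⟩, ?_⟩
      have e1 : (((M' - n).toNat : ℕ) : ℤ) = M' - n := Int.toNat_of_nonneg (by omega)
      have e2 : (((M - m).toNat : ℕ) : ℤ) = M - m := Int.toNat_of_nonneg (by omega)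
      rw [mul_assoc, ← zpow_add₀ hq]
      congr 1
      simp only [Fin.val_mk]
      congr 1
      rw [e1, e2]
      omega
    · rintro ⟨i, rfl⟩
      have hi : (i : ℕ) ≤ (M - m).toNat := by omega
      refine ⟨M' - (i : ℕ), by omega, by omega, ?_⟩
      have e2 : (((M - m).toNat : ℕ) : ℤ) = M - m := Int.toNat_of_nonneg (by omega)
      rw [mul_assoc, ← zpow_add₀ hq]
      congr 1
      congr 1
      rw [e2]
      omega
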